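/- The grounded extension of a finite argumentation framework equals the union of the in-sets of all strongly admissible labellings, and this union is itself the in-set of a strongly admissible labelling (the grounded labelling). -/
import Mathlib


inductive Label where
  | inn | out | und
deriving DecidableEq

/-- A labelling is admissible if every in-labelled argument has all its attackers
labelled out, and every out-labelled argument has at least one in-labelled attacker. -/
def Admissible {Ar : Type*} (att : Ar → Ar → Prop) (L : Ar → Label) : Prop :=
  (∀ x, L x = Label.inn → ∀ y, att y x → L y = Label.out) ∧
  (∀ x, L x = Label.out → ∃ y, att y x ∧ L y = Label.inn)

/-- A min-max numbering (with only natural-number values): in-arguments are numbered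
1 + max of the numbers of their out-labelled attackers (max ∅ = 0), and out-arguments
1 + min of the numbers of their in-labelled attackers. -/
def IsMinMax {Ar : Type*} (att : Ar → Ar → Prop) (L : Ar → Label) (MM : Ar → ℕ) : Prop :=
  (∀ x, L x = Label.inn → MM x = sSup (MM '' {y | att y x ∧ L y = Label.out}) + 1) ∧
  (∀ x, L x = Label.out → MM x = sInf (MM '' {y | att y x ∧ L y = Label.inn}) + 1)

/-- Strongly admissible: admissible and admitting a min-max numbering with only
natural-number (finite) values. -/
def StronglyAdmissible {Ar : Type*} (att : Ar → Ar → Prop) (L : Ar → Label) : Prop :=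
  Admissible att L ∧ ∃ MM : Ar → ℕ, IsMinMax att L MM

/-- Complete labelling: admissible, and every undec argument has an undec attacker
and no in-labelled attacker. -/
def CompleteLab {Ar : Type*} (att : Ar → Ar → Prop) (L : Ar → Label) : Prop :=
  Admissible att L ∧
  ∀ x, L x = Label.und →
    (∃ y, att y x ∧ L y = Label.und) ∧ ∀ y, att y x → L y ≠ Label.inn

/-- The order on labellings: Lab1 ⊑ Lab2 iff in(Lab1) ⊆ in(Lab2) and out(Lab1) ⊆ out(Lab2). -/
def LabLe {Ar : Type*} (L1 L2 : Ar → Label) : Prop :=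
  (∀ x, L1 x = Label.inn → L2 x = Label.inn) ∧
  (∀ x, L1 x = Label.out → L2 x = Label.out)

set_option linter.unusedSectionVars false

section SA19

variable {Ar : Type*} [Fintype Ar] (att : Ar → Ar → Prop)

/-- One step of the grounded iteration: arguments all of whose attackers are
attacked by `S`. -/
def Fop (S : Set Ar) : Set Ar := {x | ∀ y, att y x → ∃ z ∈ S, att z y}

lemma Fop_mono {S T : Set Ar} (h : S ⊆ T) : Fop att S ⊆ Fop att T := by
  intro x hx y hy
  obtain ⟨z, hz, hzy⟩ := hx y hy
  exact ⟨z, h hz, hzy⟩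

lemma iter_succ_mono (n : ℕ) : (Fop att)^[n] ∅ ⊆ (Fop att)^[n + 1] ∅ := by
  induction n with
  | zero => simp
  | succ n ih =>
      rw [Function.iterate_succ_apply', Function.iterate_succ_apply']
      exact Fop_mono att ih

lemma iter_le_mono {m n : ℕ} (h : m ≤ n) : (Fop att)^[m] ∅ ⊆ (Fop att)^[n] ∅ := by
  induction n with
  | zero =>
      have : m = 0 := by omega
      subst this; exact subset_rfl
  | succ n ih =>
      rcases Nat.lt_or_ge m (n + 1) with h' | h'
      · exact (ih (by omega)).trans (iter_succ_mono att n)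
      · have : m = n + 1 := by omega
        subst this; exact subset_rfl

lemma exists_iter_fix : ∃ K, (Fop att)^[K + 1] ∅ = (Fop att)^[K] ∅ := by
  by_contra h
  push_neg at h
  have hstrict : StrictMono (fun n => ((Fop att)^[n] (∅ : Set Ar)).ncard) := by
    apply strictMono_nat_of_lt_succ
    intro n
    exact Set.ncard_lt_ncard ((iter_succ_mono att n).ssubset_of_ne (h n).symm)
      (Set.toFinite _)
  have h1 : Nat.card Ar + 1 ≤ ((Fop att)^[Nat.card Ar + 1] (∅ : Set Ar)).ncard := hstrict.le_apply
  have h2 : (((Fop att)^[Nat.card Ar + 1]) (∅ : Set Ar)).ncard ≤ Nat.card Ar := by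
    have := Set.ncard_le_ncard (Set.subset_univ ((Fop att)^[Nat.card Ar + 1] (∅ : Set Ar)))
      (Set.toFinite _)
    simpa [Set.ncard_univ] using this
  omega

/-- The grounded in-set. -/
def Ain : Set Ar := ⋃ n, (Fop att)^[n] ∅

lemma mem_Ain {x : Ar} : x ∈ Ain att ↔ ∃ n, x ∈ (Fop att)^[n] ∅ := Set.mem_iUnion

lemma Ain_spec : ∃ K, Ain att = (Fop att)^[K] ∅ ∧ (Fop att)^[K + 1] ∅ = (Fop att)^[K] ∅ := by
  obtain ⟨K, hK⟩ := exists_iter_fix att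
  refine ⟨K, subset_antisymm ?_ (Set.subset_iUnion (fun n => (Fop att)^[n] ∅) K), hK⟩
  refine Set.iUnion_subset fun n => ?_
  rcases le_or_gt n K with h | h
  · exact iter_le_mono att h
  · have key : ∀ m, (Fop att)^[K + m] ∅ = (Fop att)^[K] ∅ := by
      intro m
      induction m with
      | zero => rfl
      | succ m ih =>
          rw [show K + (m + 1) = (K + m) + 1 from rfl, Function.iterate_succ_apply', ih,
            ← Function.iterate_succ_apply' (Fop att) K ∅, hK]
    have : n = K + (n - K) := by omega
    rw [this, key]

lemma Ain_fix : Fop att (Ain att) = Ain att := by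
  obtain ⟨K, h1, h2⟩ := Ain_spec att
  rw [h1, ← Function.iterate_succ_apply' (Fop att) K ∅, h2]

/-- The grounded out-set. -/
def Aout : Set Ar := {x | ∃ z ∈ Ain att, att z x}

lemma not_attacked : ∀ n, ∀ x ∈ (Fop att)^[n] ∅, ∀ z ∈ Ain att, ¬ att z x := by
  intro n
  induction n with
  | zero => simp
  | succ n ih =>
      intro x hx z hz hzx
      rw [Function.iterate_succ_apply'] at hx
      obtain ⟨w, hw, hwz⟩ := hx z hzx
      rw [← Ain_fix att] at hz
      obtain ⟨v, hv, hvw⟩ := hz w hwz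
      exact ih w hw v hv hvw

lemma Ain_not_Aout {x : Ar} (hx : x ∈ Ain att) : x ∉ Aout att := by
  obtain ⟨n, hn⟩ := (mem_Ain att).1 hx
  rintro ⟨z, hz, hzx⟩
  exact not_attacked att n x hn z hz hzx

open Classical in
/-- The grounded labelling, constructed. -/
noncomputable def Lstar : Ar → Label := fun x =>
  if x ∈ Ain att then Label.inn else if x ∈ Aout att then Label.out else Label.und

lemma Lstar_inn_iff {x : Ar} : Lstar att x = Label.inn ↔ x ∈ Ain att := by
  unfold Lstar; split_ifs <;> simp_all

lemma Lstar_out_iff {x : Ar} : Lstar att x = Label.out ↔ x ∈ Aout att := by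
  unfold Lstar
  split_ifs with h1 h2
  · simp only [reduceCtorEq, false_iff]
    exact Ain_not_Aout att h1
  · simp [h2]
  · simp [h2]

lemma Lstar_und_iff {x : Ar} : Lstar att x = Label.und ↔ x ∉ Ain att ∧ x ∉ Aout att := by
  unfold Lstar; split_ifs <;> simp_all

lemma Lstar_complete : CompleteLab att (Lstar att) := by
  refine ⟨⟨?_, ?_⟩, ?_⟩
  · intro x hx y hy
    rw [Lstar_inn_iff] at hx
    have hx' : x ∈ Fop att (Ain att) := by rw [Ain_fix att]; exact hx
    obtain ⟨z, hz, hzy⟩ := hx' y hy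
    exact (Lstar_out_iff att).2 ⟨z, hz, hzy⟩
  · intro x hx
    rw [Lstar_out_iff] at hx
    obtain ⟨z, hz, hzx⟩ := hx
    exact ⟨z, hzx, (Lstar_inn_iff att).2 hz⟩
  · intro x hx
    rw [Lstar_und_iff] at hx
    obtain ⟨hx1, hx2⟩ := hx
    constructor
    · have hx1' : x ∉ Fop att (Ain att) := by rw [Ain_fix att]; exact hx1
      simp only [Fop, Set.mem_setOf_eq] at hx1'
      push_neg at hx1'
      obtain ⟨y, hyx, hy⟩ := hx1'
      refine ⟨y, hyx, ?_⟩
      rw [Lstar_und_iff]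
      constructor
      · intro hyin; exact hx2 ⟨y, hyin, hyx⟩
      · rintro ⟨z, hz, hzy⟩; exact hy z hz hzy
    · intro y hyx hyin
      rw [Lstar_inn_iff] at hyin
      exact hx2 ⟨y, hyin, hyx⟩

/-- Stage of an argument in the grounded iteration. -/
noncomputable def rho : Ar → ℕ := fun x => sInf {n | x ∈ (Fop att)^[n] ∅}

lemma rho_spec {x : Ar} (hx : x ∈ Ain att) :
    x ∈ (Fop att)^[rho att x] ∅ ∧ 1 ≤ rho att x := by
  obtain ⟨n, hn⟩ := (mem_Ain att).1 hx
  have hne : {n | x ∈ (Fop att)^[n] ∅}.Nonempty := ⟨n, hn⟩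
  have hmem := Nat.sInf_mem hne
  refine ⟨hmem, ?_⟩
  by_contra h
  have h0 : rho att x = 0 := by omega
  rw [show sInf {n | x ∈ (Fop att)^[n] ∅} = rho att x from rfl, h0] at hmem
  simp at hmem

lemma rho_le {x : Ar} {n : ℕ} (hn : x ∈ (Fop att)^[n] ∅) : rho att x ≤ n :=
  Nat.sInf_le hn

noncomputable def sigmaN : Ar → ℕ := fun x => sInf (rho att '' {z | att z x ∧ z ∈ Ain att})

lemma attacker_of_inn {x y : Ar} (hx : x ∈ Ain att) (hy : att y x) :
    y ∈ Aout att ∧ sigmaN att y + 1 ≤ rho att x := by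
  obtain ⟨hmem, h1⟩ := rho_spec att hx
  obtain ⟨m, hm⟩ : ∃ m, rho att x = m + 1 := ⟨rho att x - 1, by omega⟩
  rw [hm, Function.iterate_succ_apply'] at hmem
  obtain ⟨z, hz, hzy⟩ := hmem y hy
  have hzA : z ∈ Ain att := (mem_Ain att).2 ⟨m, hz⟩
  have hrz : rho att z ≤ m := rho_le att hz
  have hσ : sigmaN att y ≤ rho att z := Nat.sInf_le ⟨z, ⟨hzy, hzA⟩, rfl⟩
  exact ⟨⟨z, hzA, hzy⟩, by omega⟩

lemma sigmaN_attained {x : Ar} (hx : x ∈ Aout att) :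
    ∃ z, att z x ∧ z ∈ Ain att ∧ rho att z = sigmaN att x := by
  obtain ⟨z0, hz0, hz0x⟩ := hx
  have hne : (rho att '' {z | att z x ∧ z ∈ Ain att}).Nonempty :=
    ⟨rho att z0, z0, ⟨hz0x, hz0⟩, rfl⟩
  obtain ⟨z, ⟨hzx, hzA⟩, hzr⟩ := Nat.sInf_mem hne
  exact ⟨z, hzx, hzA, hzr⟩

open Classical in
/-- A bound for the min-max numbering. -/
noncomputable def bnd : Ar → ℕ := fun x =>
  if x ∈ Ain att then 2 * rho att x - 1 else if x ∈ Aout att then 2 * sigmaN att x else 0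

/-- One step of the min-max iteration. -/
noncomputable def gstep (L : Ar → Label) (M : Ar → ℕ) : Ar → ℕ := fun x =>
  if L x = Label.inn then sSup (M '' {y | att y x ∧ L y = Label.out}) + 1
  else if L x = Label.out then sInf (M '' {y | att y x ∧ L y = Label.inn}) + 1
  else 0

lemma nat_sSup_le {s : Set ℕ} {c : ℕ} (h : ∀ b ∈ s, b ≤ c) : sSup s ≤ c := by
  rcases s.eq_empty_or_nonempty with rfl | hne
  · simp
  · exact csSup_le hne h

lemma gstep_mono {L : Ar → Label} {M1 M2 : Ar → ℕ} (h : ∀ x, M1 x ≤ M2 x) :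
    ∀ x, gstep att L M1 x ≤ gstep att L M2 x := by
  intro x
  unfold gstep
  split_ifs with h1 h2
  · have hle : sSup (M1 '' {y | att y x ∧ L y = Label.out}) ≤
        sSup (M2 '' {y | att y x ∧ L y = Label.out}) := by
      apply nat_sSup_le
      rintro b ⟨y, hy, rfl⟩
      exact (h y).trans (le_csSup ((Set.toFinite _).image M2).bddAbove ⟨y, hy, rfl⟩)
    omega
  · have hle : sInf (M1 '' {y | att y x ∧ L y = Label.inn}) ≤
        sInf (M2 '' {y | att y x ∧ L y = Label.inn}) := by
      rcases Set.eq_empty_or_nonempty {y | att y x ∧ L y = Label.inn} with he | hne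
      · rw [he]; simp
      · obtain ⟨y, hy, hyv⟩ := Nat.sInf_mem (hne.image M2)
        calc sInf (M1 '' {y | att y x ∧ L y = Label.inn}) ≤ M1 y := Nat.sInf_le ⟨y, hy, rfl⟩
          _ ≤ M2 y := h y
          _ = _ := hyv
    omega
  · exact le_rfl

/-- The min-max iteration. -/
noncomputable def Mit (L : Ar → Label) : ℕ → Ar → ℕ := fun k => (gstep att L)^[k] (fun _ => 0)

lemma Mit_mono (L : Ar → Label) : ∀ k x, Mit att L k x ≤ Mit att L (k + 1) x := by
  intro k
  induction k with
  | zero => intro x; exact Nat.zero_le _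
  | succ k ih =>
      intro x
      rw [show Mit att L (k + 1) = gstep att L (Mit att L k) from
        Function.iterate_succ_apply' _ _ _,
        show Mit att L (k + 1 + 1) = gstep att L (Mit att L (k + 1)) from
        Function.iterate_succ_apply' _ _ _]
      exact gstep_mono att ih x

lemma Mit_le_bnd : ∀ k x, Mit att (Lstar att) k x ≤ bnd att x := by
  intro k
  induction k with
  | zero => intro x; exact Nat.zero_le _
  | succ k ih =>
      intro x
      rw [show Mit att (Lstar att) (k + 1) = gstep att (Lstar att) (Mit att (Lstar att) k) from
        Function.iterate_succ_apply' _ _ _]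
      unfold gstep
      split_ifs with h1 h2
      · have hxA : x ∈ Ain att := (Lstar_inn_iff att).1 h1
        have hρ1 : 1 ≤ rho att x := (rho_spec att hxA).2
        obtain ⟨m, hm⟩ : ∃ m, rho att x = m + 1 := ⟨rho att x - 1, by omega⟩
        have hb : bnd att x = 2 * rho att x - 1 := by unfold bnd; rw [if_pos hxA]
        have hsup : sSup (Mit att (Lstar att) k '' {y | att y x ∧ Lstar att y = Label.out})
            ≤ 2 * m := by
          apply nat_sSup_le
          rintro b ⟨y, ⟨hyx, hyo⟩, rfl⟩
          have hyA : y ∈ Aout att := (Lstar_out_iff att).1 hyo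
          have hyni : y ∉ Ain att := fun hc => Ain_not_Aout att hc hyA
          obtain ⟨_, hσ⟩ := attacker_of_inn att hxA hyx
          have hby : bnd att y = 2 * sigmaN att y := by
            unfold bnd; rw [if_neg hyni, if_pos hyA]
          have hiy := ih y
          rw [hby] at hiy
          omega
        rw [hb, hm]; omega
      · have hxO : x ∈ Aout att := (Lstar_out_iff att).1 h2
        have hxni : x ∉ Ain att := fun hc => Ain_not_Aout att hc hxO
        obtain ⟨z, hzx, hzA, hzr⟩ := sigmaN_attained att hxO
        have hzinn : Lstar att z = Label.inn := (Lstar_inn_iff att).2 hzA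
        have h3 : sInf (Mit att (Lstar att) k '' {y | att y x ∧ Lstar att y = Label.inn})
            ≤ Mit att (Lstar att) k z := Nat.sInf_le ⟨z, ⟨hzx, hzinn⟩, rfl⟩
        have h4 := ih z
        have hbz : bnd att z = 2 * rho att z - 1 := by unfold bnd; rw [if_pos hzA]
        have hz1 : 1 ≤ rho att z := (rho_spec att hzA).2
        have hb : bnd att x = 2 * sigmaN att x := by
          unfold bnd; rw [if_neg hxni, if_pos hxO]
        rw [hb]
        omega
      · exact Nat.zero_le _

lemma Lstar_minmax : ∃ MM : Ar → ℕ, IsMinMax att (Lstar att) MM := by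
  classical
  have hmono := Mit_mono att (Lstar att)
  have hbd := Mit_le_bnd att
  set B := ∑ x : Ar, bnd att x with hB
  have hsum : ∀ k, ∑ x : Ar, Mit att (Lstar att) k x ≤ B :=
    fun k => Finset.sum_le_sum (fun x _ => hbd k x)
  have hkey : ∃ k, ∀ x, Mit att (Lstar att) k x = Mit att (Lstar att) (k + 1) x := by
    by_contra h
    push_neg at h
    have hstrict : StrictMono (fun k => ∑ x : Ar, Mit att (Lstar att) k x) := by
      apply strictMono_nat_of_lt_succ
      intro k
      obtain ⟨x0, hx0⟩ := h k
      exact Finset.sum_lt_sum (fun x _ => hmono k x)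
        ⟨x0, Finset.mem_univ x0, lt_of_le_of_ne (hmono k x0) hx0⟩
    have h1 : B + 1 ≤ ∑ x : Ar, Mit att (Lstar att) (B + 1) x := hstrict.le_apply
    have h2 := hsum (B + 1)
    omega
  obtain ⟨k, hk⟩ := hkey
  have hstep : Mit att (Lstar att) (k + 1) = gstep att (Lstar att) (Mit att (Lstar att) k) :=
    Function.iterate_succ_apply' _ _ _
  refine ⟨Mit att (Lstar att) k, ?_, ?_⟩
  · intro x hx
    rw [hk x, hstep]
    unfold gstep
    rw [if_pos hx]
  · intro x hx
    rw [hk x, hstep]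
    unfold gstep
    rw [if_neg (by simp [hx]), if_pos hx]

lemma complete_allOut {Lgr : Ar → Label} (hgr : CompleteLab att Lgr) {x : Ar}
    (h : ∀ y, att y x → Lgr y = Label.out) : Lgr x = Label.inn := by
  cases hc : Lgr x with
  | inn => rfl
  | out =>
      obtain ⟨y, hy, hyi⟩ := hgr.1.2 x hc
      rw [h y hy] at hyi
      simp at hyi
  | und =>
      obtain ⟨⟨y, hy, hyu⟩, _⟩ := hgr.2 x hc
      rw [h y hy] at hyu
      simp at hyu

lemma complete_hasInn {Lgr : Ar → Label} (hgr : CompleteLab att Lgr) {x y : Ar}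
    (hyx : att y x) (hyi : Lgr y = Label.inn) : Lgr x = Label.out := by
  cases hc : Lgr x with
  | out => rfl
  | inn =>
      have := hgr.1.1 x hc y hyx
      rw [hyi] at this
      simp at this
  | und => exact absurd hyi ((hgr.2 x hc).2 y hyx)

lemma sa_le_grounded {Lgr L : Ar → Label} (hgr : CompleteLab att Lgr)
    (hL : StronglyAdmissible att L) :
    ∀ x, (L x = Label.inn → Lgr x = Label.inn) ∧ (L x = Label.out → Lgr x = Label.out) := by
  obtain ⟨⟨hadm1, hadm2⟩, MM, hmm1, hmm2⟩ := hL
  have key : ∀ n x, MM x = n →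
      (L x = Label.inn → Lgr x = Label.inn) ∧ (L x = Label.out → Lgr x = Label.out) := by
    intro n
    induction n using Nat.strong_induction_on with
    | _ n ih =>
      intro x hxn
      constructor
      · intro hx
        apply complete_allOut att hgr
        intro y hy
        have hyo : L y = Label.out := hadm1 x hx y hy
        have hle : MM y ≤ sSup (MM '' {y | att y x ∧ L y = Label.out}) :=
          le_csSup (Set.toFinite _).bddAbove ⟨y, ⟨hy, hyo⟩, rfl⟩
        have hlt : MM y < n := by
          have hx' := hmm1 x hx
          omega
        exact (ih (MM y) hlt y rfl).2 hyo
      · intro hx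
        obtain ⟨y0, hy0, hy0i⟩ := hadm2 x hx
        have hne : (MM '' {y | att y x ∧ L y = Label.inn}).Nonempty :=
          ⟨MM y0, y0, ⟨hy0, hy0i⟩, rfl⟩
        obtain ⟨y, ⟨hyx, hyi⟩, hyv⟩ := Nat.sInf_mem hne
        have hlt : MM y < n := by
          have hx' := hmm2 x hx
          omega
        have hgy : Lgr y = Label.inn := (ih (MM y) hlt y rfl).1 hyi
        exact complete_hasInn att hgr hyx hgy
  intro x
  exact key (MM x) x rfl

end SA19

/-- The grounded extension equals the union of in-sets of all strongly
admissible labellings, and this union is itself the in-set of a strongly admissible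
labelling. -/
theorem grounded_eq_union_stronglyAdmissible
    {Ar : Type*} [Fintype Ar] (att : Ar → Ar → Prop) (Lgr : Ar → Label)
    (hgr : CompleteLab att Lgr ∧ ∀ L, CompleteLab att L → LabLe Lgr L) :
    ({x | Lgr x = Label.inn} =
      {x | ∃ L : Ar → Label, StronglyAdmissible att L ∧ L x = Label.inn}) ∧
    (∃ L : Ar → Label, StronglyAdmissible att L ∧
      {x | L x = Label.inn} =
        {x | ∃ L' : Ar → Label, StronglyAdmissible att L' ∧ L' x = Label.inn}) := by
  obtain ⟨hcomp, hmin⟩ := hgr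
  have hSA : StronglyAdmissible att (Lstar att) :=
    ⟨(Lstar_complete att).1, Lstar_minmax att⟩
  have hle : LabLe Lgr (Lstar att) := hmin _ (Lstar_complete att)
  constructor
  · ext x
    simp only [Set.mem_setOf_eq]
    constructor
    · intro hx; exact ⟨Lstar att, hSA, hle.1 x hx⟩
    · rintro ⟨L, hL, hx⟩; exact (sa_le_grounded att hcomp hL x).1 hx
  · refine ⟨Lstar att, hSA, ?_⟩
    ext x
    simp only [Set.mem_setOf_eq]
    constructor
    · intro hx; exact ⟨Lstar att, hSA, hx⟩
    · rintro ⟨L, hL, hx⟩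
      exact hle.1 x ((sa_le_grounded att hcomp hL x).1 hx)
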